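/- Let f : I → I be continuous and x a point with f^l(x) > x and f^l strictly increasing on an interval V ∋ x with f^l(inf V) < q for some fixed point q of f^l with q < x and f^l(y) > y for all y ∈ (q, x). If moreover f^{2l}(x) < x and there is a point y ∈ (x, f^l(x)) with f^l(y) = q, then f has positive topological entropy. -/

import Mathlib

open Filter ENNReal

/-- The maximal cardinality of an `(n, ε)`-separated subset of `I` for `f`. -/
noncomputable def sepCard (f : ℝ → ℝ) (I : Set ℝ) (n : ℕ) (ε : ℝ) : ℝ≥0∞ :=
  sSup {c : ℝ≥0∞ | ∃ S : Finset ℝ, ↑S ⊆ I ∧ c = S.card ∧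
    ∀ x ∈ S, ∀ y ∈ S, x ≠ y → ∃ m < n, ε < |f^[m] x - f^[m] y|}

/-- Topological entropy of `f` on `I` via `(n,ε)`-separated sets.  Since
`ε ↦ limsup_n (1/n) log H(f,n,ε)` is monotone as `ε` decreases, the limit
as `ε → 0` equals the supremum over `ε > 0`. -/
noncomputable def topEntropy (f : ℝ → ℝ) (I : Set ℝ) : EReal :=
  ⨆ (ε : ℝ) (_ : 0 < ε),
    Filter.limsup (fun n : ℕ => ENNReal.log (sepCard f I n ε) / (n : EReal)) atTop

lemma iter_contOn {A B : ℝ} {f : ℝ → ℝ} (hf : ContinuousOn f (Set.Icc A B))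
    (hmap : Set.MapsTo f (Set.Icc A B) (Set.Icc A B)) (n : ℕ) :
    ContinuousOn (f^[n]) (Set.Icc A B) := by
  induction n with
  | zero => simpa using continuousOn_id
  | succ n ih =>
    rw [Function.iterate_succ]
    exact ih.comp hf hmap

lemma itinerary (H : ℝ → ℝ) (J : Bool → Set ℝ) (C : Set ℝ)
    (hJC : ∀ i, J i ⊆ C) (hcov : ∀ i, C ⊆ H '' (J i))
    (hne : ∀ i, (J i).Nonempty) :
    ∀ (m : ℕ) (a : ℕ → Bool), ∃ z, z ∈ J (a 0) ∧ ∀ i < m, H^[i] z ∈ J (a i) := by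
  intro m
  induction m with
  | zero =>
    intro a
    obtain ⟨z, hz⟩ := hne (a 0)
    exact ⟨z, hz, fun i hi => absurd hi (Nat.not_lt_zero i)⟩
  | succ m ih =>
    intro a
    obtain ⟨z', hz', hz''⟩ := ih (fun i => a (i + 1))
    obtain ⟨z, hz, hHz⟩ := hcov (a 0) (hJC (a 1) hz')
    refine ⟨z, hz, fun i hi => ?_⟩
    match i with
    | 0 => simpa using hz
    | (j+1) =>
      rw [Function.iterate_succ_apply, hHz]
      exact hz'' j (by omega)

/-- The configuration of Lemma 2 (a homoclinic point for `f^l`) forces positive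
topological entropy. -/
theorem pos_entropy_of_lemma_two_configuration
    (A B : ℝ) (f : ℝ → ℝ)
    (hf : ContinuousOn f (Set.Icc A B))
    (hmap : Set.MapsTo f (Set.Icc A B) (Set.Icc A B))
    (l : ℕ) (hl : 1 ≤ l)
    (x v₁ v₂ q : ℝ)
    (hxI : x ∈ Set.Icc A B) (hqI : q ∈ Set.Icc A B)
    (hxV : x ∈ Set.Ioo v₁ v₂)
    (hmono : StrictMonoOn (f^[l]) (Set.Ioo v₁ v₂))
    (hx : x < f^[l] x)
    (hq : f^[l] q = q) (hqx : q < x)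
    (hVq : f^[l] v₁ < q)
    (hinc : ∀ y ∈ Set.Ioo q x, y < f^[l] y)
    (h2l : f^[l] (f^[l] x) < x)
    (y : ℝ) (hy : y ∈ Set.Ioo x (f^[l] x)) (hyq : f^[l] y = q) :
    0 < topEntropy f (Set.Icc A B) := by
  set I := Set.Icc A B with hI
  set g := f^[l] with hgdef
  have hgmap : Set.MapsTo g I I := hmap.iterate l
  have hgcont : ContinuousOn g I := iter_contOn hf hmap l
  have hgiter : ∀ n : ℕ, g^[n] = f^[l * n] := fun n => by
    rw [hgdef, Function.iterate_mul]
  have hgiter_cont : ∀ n : ℕ, ContinuousOn (g^[n]) I := fun n => by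
    rw [hgiter]; exact iter_contOn hf hmap (l * n)
  have hqfix : ∀ n : ℕ, g^[n] q = q := fun n => Function.iterate_fixed hq n
  have hgxI : g x ∈ I := hgmap hxI
  have hqgx_sub : Set.Icc q (g x) ⊆ I := Set.Icc_subset_Icc hqI.1 hgxI.2
  -- Step 1: some iterate of z₀ escapes above x
  set z₀ : ℝ := (q + x) / 2 with hz₀def
  have hz₀ : z₀ ∈ Set.Ioo q x := ⟨by simp only [hz₀def]; linarith, by simp only [hz₀def]; linarith⟩
  have hIooI : Set.Ioo q x ⊆ I := Set.Ioo_subset_Icc_self.trans (Set.Icc_subset_Icc hqI.1 hxI.2)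
  have hescape : ∃ k, x < g^[k] z₀ := by
    by_contra hcon
    push_neg at hcon
    have hmem : ∀ k, g^[k] z₀ ∈ Set.Ioo q x := by
      intro k
      induction k with
      | zero => simpa using hz₀
      | succ k ih =>
        rw [Function.iterate_succ_apply']
        refine ⟨lt_trans ih.1 (hinc _ ih), ?_⟩
        rcases lt_or_eq_of_le (hcon (k + 1)) with h | h
        · rwa [Function.iterate_succ_apply'] at h
        · exfalso
          have h2 : g^[k + 2] z₀ = g x := by
            have : g^[k + 1] z₀ = x := by rw [← h]
            calc g^[k + 2] z₀ = g (g^[k+1] z₀) := Function.iterate_succ_apply' g (k+1) z₀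
              _ = g x := by rw [this]
          have := hcon (k + 2)
          rw [h2] at this
          exact absurd this (not_le.mpr hx)
    set u : ℕ → ℝ := fun k => g^[k] z₀ with hu
    have humono : Monotone u := monotone_nat_of_le_succ (fun k => by
      have := hinc _ (hmem k)
      rw [hu]
      simp only
      rw [Function.iterate_succ_apply']
      exact le_of_lt this)
    have hbdd : BddAbove (Set.range u) := ⟨x, by rintro _ ⟨k, rfl⟩; exact le_of_lt (hmem k).2⟩
    have htend : Tendsto u atTop (nhds (⨆ k, u k)) := tendsto_atTop_ciSup humono hbdd
    set L := ⨆ k, u k with hL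
    have hLz₀ : z₀ ≤ L := le_ciSup hbdd 0
    have hLx : L ≤ x := ciSup_le (fun k => le_of_lt (hmem k).2)
    have hLI : L ∈ I := Set.Icc_subset_Icc hqI.1 hxI.2 ⟨le_of_lt (lt_of_lt_of_le hz₀.1 hLz₀), hLx⟩
    have htend' : Tendsto u atTop (nhdsWithin L I) := by
      rw [tendsto_nhdsWithin_iff]
      exact ⟨htend, Filter.Eventually.of_forall (fun k => hIooI (hmem k))⟩
    have hgtend : Tendsto (fun k => g (u k)) atTop (nhds (g L)) :=
      (hgcont L hLI).tendsto.comp htend'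
    have hshift : Tendsto (fun k => g (u k)) atTop (nhds L) := by
      have : (fun k => g (u k)) = fun k => u (k + 1) := by
        funext k
        rw [hu]
        simp only
        exact (Function.iterate_succ_apply' g k z₀).symm
      rw [this]
      exact htend.comp (tendsto_add_atTop_nat 1)
    have hgL : g L = L := tendsto_nhds_unique hgtend hshift
    rcases lt_or_eq_of_le hLx with h | h
    · exact absurd hgL (ne_of_gt (hinc L ⟨lt_of_lt_of_le hz₀.1 hLz₀, h⟩))
    · rw [h] at hgL
      exact absurd hgL (ne_of_gt hx)
  obtain ⟨k, hk⟩ := hescape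
  have hqz₀ : q ≤ z₀ := le_of_lt hz₀.1
  -- w ∈ (q, x) with g^[k] w = x
  obtain ⟨w, hwmem, hwx⟩ : ∃ w ∈ Set.Icc q z₀, g^[k] w = x := by
    have hsub : Set.Icc q z₀ ⊆ I := Set.Icc_subset_Icc hqI.1 (le_of_lt (lt_of_lt_of_le hz₀.2 hxI.2))
    have := intermediate_value_Icc hqz₀ ((hgiter_cont k).mono hsub)
    have hx' : x ∈ Set.Icc (g^[k] q) (g^[k] z₀) := by
      rw [hqfix k]
      exact ⟨le_of_lt hqx, le_of_lt hk⟩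
    obtain ⟨w, hw1, hw2⟩ := this hx'
    exact ⟨w, hw1, hw2⟩
  have hqw : q < w := by
    rcases lt_or_eq_of_le hwmem.1 with h | h
    · exact h
    · exfalso; rw [← h, hqfix k] at hwx; exact absurd hwx (ne_of_lt hqx)
  have hwxlt : w < x := lt_of_le_of_lt hwmem.2 hz₀.2
  have hwIoo : w ∈ Set.Ioo q x := ⟨hqw, hwxlt⟩
  -- v ∈ [q, w] with g v = w
  obtain ⟨v, hvmem, hvw⟩ : ∃ v ∈ Set.Icc q w, g v = w := by
    have hsub : Set.Icc q w ⊆ I := Set.Icc_subset_Icc hqI.1 (le_of_lt (lt_of_lt_of_le hwxlt hxI.2))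
    have := intermediate_value_Icc (le_of_lt hqw) (hgcont.mono hsub)
    have hw' : w ∈ Set.Icc (g q) (g w) := by
      rw [hq]
      exact ⟨le_of_lt hqw, le_of_lt (hinc w hwIoo)⟩
    exact this hw'
  -- p₃ ∈ [x, y] with g p₃ = w
  have hxy : x ≤ y := le_of_lt hy.1
  have hyI : y ∈ I := ⟨le_trans hxI.1 hxy, le_trans (le_of_lt hy.2) hgxI.2⟩
  obtain ⟨p₃, hp₃mem, hp₃⟩ : ∃ p₃ ∈ Set.Icc x y, g p₃ = w := by
    have hsub : Set.Icc x y ⊆ I := Set.Icc_subset_Icc hxI.1 hyI.2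
    have := intermediate_value_Icc' hxy (hgcont.mono hsub)
    have hw' : w ∈ Set.Icc (g y) (g x) := by
      rw [hyq]
      exact ⟨le_of_lt hqw, le_of_lt (lt_trans hwxlt hx)⟩
    exact this hw'
  -- the horseshoe map
  set N : ℕ := k + 2 with hN
  set H : ℝ → ℝ := g^[N] with hH
  have hHq : H q = q := hqfix N
  have hHv : H v = g x := by
    rw [hH, hN, show k + 2 = (k + 1) + 1 from rfl, Function.iterate_succ_apply, hvw,
      Function.iterate_succ_apply', hwx]
  have hHy : H y = q := by
    rw [hH, hN, show k + 2 = (k + 1) + 1 from rfl, Function.iterate_succ_apply, hyq, hqfix]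
  have hHp₃ : H p₃ = g x := by
    rw [hH, hN, show k + 2 = (k + 1) + 1 from rfl, Function.iterate_succ_apply, hp₃,
      Function.iterate_succ_apply', hwx]
  set C : Set ℝ := Set.Icc q (g x) with hC
  set J : Bool → Set ℝ := fun i => if i then Set.Icc x y else Set.Icc q w with hJ
  have hJC : ∀ i, J i ⊆ C := by
    intro i
    cases i
    · exact Set.Icc_subset_Icc (le_refl q) (le_of_lt (lt_trans hwxlt hx))
    · exact Set.Icc_subset_Icc (le_of_lt hqx) (le_of_lt hy.2)
  have hJI : ∀ i, J i ⊆ I := fun i => (hJC i).trans hqgx_sub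
  have hHcont : ContinuousOn H I := hgiter_cont N
  have hcov : ∀ i, C ⊆ H '' (J i) := by
    intro i
    cases i
    · -- J false = Icc q w, use q ↦ q and v ↦ g x
      have hqv : q ≤ v := hvmem.1
      have hsub : Set.Icc q v ⊆ Set.Icc q w := Set.Icc_subset_Icc (le_refl q) hvmem.2
      have hcont : ContinuousOn H (Set.Icc q v) := hHcont.mono ((hsub.trans (hJC false)).trans hqgx_sub)
      have := intermediate_value_Icc hqv hcont
      rw [hHq, hHv] at this
      exact this.trans (Set.image_mono (f := H) hsub)
    · -- J true = Icc x y, use p₃ ↦ g x and y ↦ q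
      have hp₃y : p₃ ≤ y := hp₃mem.2
      have hsub : Set.Icc p₃ y ⊆ Set.Icc x y := Set.Icc_subset_Icc hp₃mem.1 (le_refl y)
      have hcont : ContinuousOn H (Set.Icc p₃ y) := hHcont.mono ((hsub.trans (hJC true)).trans hqgx_sub)
      have := intermediate_value_Icc' hp₃y hcont
      rw [hHy, hHp₃] at this
      exact this.trans (Set.image_mono (f := H) hsub)
  have hne : ∀ i, (J i).Nonempty := by
    intro i
    cases i
    · exact ⟨q, le_refl q, le_of_lt hqw⟩
    · exact ⟨x, le_refl x, hxy⟩
  set Lp : ℕ := l * N with hLp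
  have hLp_pos : 0 < Lp := Nat.mul_pos (by omega) (by omega)
  have hHit : ∀ j : ℕ, H^[j] = f^[Lp * j] := by
    intro j
    rw [hH, ← Function.iterate_mul, hgiter (N * j)]
    congr 1
    rw [hLp, mul_assoc]
  set ε : ℝ := (x - w) / 2 with hεdef
  have hε : 0 < ε := by rw [hεdef]; linarith
  have hdisj : ∀ p : ℝ, p ∈ J false → p ∈ J true → False := by
    intro p h1 h2
    have h1' : p ∈ Set.Icc q w := h1
    have h2' : p ∈ Set.Icc x y := h2
    have := h1'.2
    have := h2'.1
    linarith
  have habs : ∀ p₁ p₂ : ℝ, p₁ ∈ J false → p₂ ∈ J true → ε < |p₁ - p₂| := by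
    intro p₁ p₂ h1 h2
    have h1' : p₁ ∈ Set.Icc q w := h1
    have h2' : p₂ ∈ Set.Icc x y := h2
    rw [abs_sub_comm]
    have h3 : x - w ≤ p₂ - p₁ := by have := h1'.2; have := h2'.1; linarith
    calc ε < x - w := by rw [hεdef]; linarith
      _ ≤ p₂ - p₁ := h3
      _ ≤ |p₂ - p₁| := le_abs_self _
  have key : ∀ n : ℕ, (2 : ℝ≥0∞) ^ (n / Lp) ≤ sepCard f I n ε := by
    intro n
    set m := n / Lp with hm
    set ext : (Fin m → Bool) → ℕ → Bool := fun a i => if h : i < m then a ⟨i, h⟩ else false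
      with hext
    have hZex : ∀ a : Fin m → Bool, ∃ z, z ∈ J (ext a 0) ∧ ∀ i < m, H^[i] z ∈ J (ext a i) :=
      fun a => itinerary H J C hJC hcov hne m (ext a)
    choose Z hZ0 hZit using hZex
    have hextval : ∀ (a : Fin m → Bool) (i : Fin m), ext a i.val = a i := by
      intro a i
      simp [hext, i.isLt]
    have hinj : Function.Injective Z := by
      intro a b hab
      by_contra hne'
      obtain ⟨i, hi⟩ := Function.ne_iff.mp hne'
      have h1 : H^[i.val] (Z a) ∈ J (a i) := by rw [← hextval a i]; exact hZit a i.val i.isLt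
      have h2 : H^[i.val] (Z b) ∈ J (b i) := by rw [← hextval b i]; exact hZit b i.val i.isLt
      rw [hab] at h1
      cases ha : a i <;> cases hb : b i
      · rw [ha, hb] at hi; exact hi rfl
      · rw [ha] at h1; rw [hb] at h2; exact hdisj _ h1 h2
      · rw [ha] at h1; rw [hb] at h2; exact hdisj _ h2 h1
      · rw [ha, hb] at hi; exact hi rfl
    set S : Finset ℝ := Finset.image Z Finset.univ with hS
    have hcard : S.card = 2 ^ m := by
      rw [hS, Finset.card_image_of_injective _ hinj, Finset.card_univ]
      simp
    apply le_sSup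
    refine ⟨S, ?_, ?_, ?_⟩
    · intro p hp
      rw [Finset.coe_image] at hp
      obtain ⟨a, _, rfl⟩ := hp
      exact hJI _ (hZ0 a)
    · rw [hcard]
      norm_cast
    · intro p₁ hp₁ p₂ hp₂ hpne
      rw [hS, Finset.mem_image] at hp₁ hp₂
      obtain ⟨a, _, rfl⟩ := hp₁
      obtain ⟨b, _, rfl⟩ := hp₂
      have hab : a ≠ b := fun h => hpne (by rw [h])
      obtain ⟨i, hi⟩ := Function.ne_iff.mp hab
      refine ⟨Lp * i.val, ?_, ?_⟩
      · have h1 : Lp * (i.val + 1) ≤ Lp * m := Nat.mul_le_mul_left Lp i.isLt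
        have h2 : m * Lp ≤ n := Nat.div_mul_le_self n Lp
        have h3 : Lp * i.val < Lp * (i.val + 1) :=
          mul_lt_mul_of_pos_left (Nat.lt_succ_self i.val) hLp_pos
        calc Lp * i.val < Lp * (i.val + 1) := h3
          _ ≤ Lp * m := h1
          _ = m * Lp := Nat.mul_comm Lp m
          _ ≤ n := h2
      · rw [← hHit i.val]
        have h1 : H^[i.val] (Z a) ∈ J (a i) := by rw [← hextval a i]; exact hZit a i.val i.isLt
        have h2 : H^[i.val] (Z b) ∈ J (b i) := by rw [← hextval b i]; exact hZit b i.val i.isLt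
        cases ha : a i <;> cases hb : b i
        · rw [ha, hb] at hi; exact absurd rfl hi
        · rw [ha] at h1; rw [hb] at h2; exact habs _ _ h1 h2
        · rw [ha] at h1; rw [hb] at h2
          rw [abs_sub_comm]
          exact habs _ _ h2 h1
        · rw [ha, hb] at hi; exact absurd rfl hi
  -- conclude positivity of entropy
  set c : EReal := (((Real.log 2 / (2 * (Lp : ℝ))) : ℝ) : EReal) with hc
  have hcpos : (0 : EReal) < c := by
    rw [hc]
    apply EReal.coe_pos.mpr
    apply div_pos (Real.log_pos one_lt_two)
    have : (0:ℝ) < (Lp:ℝ) := by exact_mod_cast hLp_pos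
    linarith
  have hlog2 : ENNReal.log 2 = ((Real.log 2 : ℝ) : EReal) := by
    rw [ENNReal.log_pos_real' (by norm_num)]
    norm_num
  have hlogpos : (0:ℝ) < Real.log 2 := Real.log_pos one_lt_two
  have hev : ∀ᶠ n : ℕ in atTop, c ≤ ENNReal.log (sepCard f I n ε) / (n : EReal) := by
    filter_upwards [eventually_ge_atTop (2 * Lp)] with n hn
    set m := n / Lp with hm
    have hm1 : 1 ≤ m := by
      rw [hm]
      exact (Nat.one_le_div_iff hLp_pos).mpr (by omega)
    have hnpos : 0 < n := by omega
    have h1 : ENNReal.log ((2:ℝ≥0∞) ^ m) ≤ ENNReal.log (sepCard f I n ε) :=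
      ENNReal.log_monotone (key n)
    rw [ENNReal.log_pow, hlog2] at h1
    have hnn : (0:EReal) ≤ (n : EReal) := by exact_mod_cast Nat.zero_le n
    have h2 : ((m : EReal) * ((Real.log 2 : ℝ) : EReal)) / (n : EReal)
        ≤ ENNReal.log (sepCard f I n ε) / (n : EReal) :=
      EReal.div_le_div_right_of_nonneg hnn h1
    refine le_trans ?_ h2
    rw [← EReal.coe_coe_eq_natCast m, ← EReal.coe_coe_eq_natCast n, ← EReal.coe_mul,
      ← EReal.coe_div, hc]
    rw [EReal.coe_le_coe_iff]
    -- real inequality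
    have e1 := Nat.div_add_mod n Lp
    rw [← hm] at e1
    have e2 : n % Lp < Lp := Nat.mod_lt n hLp_pos
    have e3 : Lp ≤ Lp * m := Nat.le_mul_of_pos_right Lp hm1
    have e4 : n ≤ 2 * (Lp * m) := by
      calc n = Lp * m + n % Lp := e1.symm
        _ ≤ Lp * m + Lp := by omega
        _ ≤ Lp * m + Lp * m := by omega
        _ = 2 * (Lp * m) := by ring
    have e4' : (n:ℝ) ≤ 2 * (Lp:ℝ) * (m:ℝ) := by
      have := (Nat.cast_le (α := ℝ)).mpr e4
      push_cast at this ⊢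
      linarith
    have hnR : (0:ℝ) < (n:ℝ) := by exact_mod_cast hnpos
    have hLpR : (0:ℝ) < (Lp:ℝ) := by exact_mod_cast hLp_pos
    rw [div_le_div_iff₀ (by linarith) hnR]
    nlinarith [mul_le_mul_of_nonneg_left e4' hlogpos.le]
  have hlimsup : c ≤ Filter.limsup
      (fun n : ℕ => ENNReal.log (sepCard f I n ε) / (n : EReal)) atTop := by
    calc c = Filter.limsup (fun _ : ℕ => c) atTop := (Filter.limsup_const c).symm
      _ ≤ _ := Filter.limsup_le_limsup hev
  have hle : Filter.limsup
      (fun n : ℕ => ENNReal.log (sepCard f I n ε) / (n : EReal)) atTop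
      ≤ topEntropy f I :=
    le_iSup₂ (f := fun (ε' : ℝ) (_ : 0 < ε') => Filter.limsup
      (fun n : ℕ => ENNReal.log (sepCard f I n ε') / (n : EReal)) atTop) ε hε
  exact lt_of_lt_of_le hcpos (le_trans hlimsup hle)
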